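/- Let z_0, …, z_{N−1} be complex numbers. For every positive integer R, |∑_{n=0}^{N−1} z_n|² ≤ ((N + R − 1)/R) · ∑_{|r|<R} (1 − |r|/R) · |∑_{n : 0 ≤ n < N and 0 ≤ n+r < N} conj(z_n) · z_{n+r}|, where the inner sum is over those integers n with both 0 ≤ n < N and 0 ≤ n + r < N, and conj denotes complex conjugation. -/

import Mathlib

noncomputable section

open Finset Complex in

lemma sum_Ico_shift (F : ℤ → ℂ) (a b c : ℤ) :
    ∑ m ∈ Finset.Ico a b, F (m - c) = ∑ n ∈ Finset.Ico (a - c) (b - c), F n := by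
  rw [show Finset.Ico a b = Finset.Ico (a - c + c) (b - c + c) by ring_nf,
    ← Finset.map_add_right_Ico _ _ c, Finset.sum_map]
  simp

open Finset Complex in
lemma fiber_card (R : ℕ) (d : ℤ) :
    (((Finset.range R) ×ˢ (Finset.range R)).filter
      (fun p => (p.1 : ℤ) - p.2 = d)).card = R - d.natAbs := by
  rw [← Finset.card_range (R - d.natAbs)]
  apply Finset.card_bij' (i := fun p _ => min p.1 p.2)
    (j := fun k _ => (k + d.toNat, k + (-d).toNat))
  · intro p hp
    simp only [Finset.mem_filter, Finset.mem_product, Finset.mem_range] at hp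
    simp only [Finset.mem_range]
    omega
  · intro k hk
    simp only [Finset.mem_range] at hk
    simp only [Finset.mem_filter, Finset.mem_product, Finset.mem_range]
    omega
  · intro p hp
    simp only [Finset.mem_filter, Finset.mem_product, Finset.mem_range] at hp
    obtain ⟨⟨h1, h2⟩, h3⟩ := hp
    ext <;> simp <;> omega
  · intro k hk
    simp only [Finset.mem_range] at hk
    omega

open Finset Complex in
lemma sum_shift_count (R : ℕ) (h : ℤ → ℝ) :
    ∑ r ∈ Finset.range R, ∑ s ∈ Finset.range R, h ((r : ℤ) - s)
      = ∑ d ∈ Finset.Icc (-(R : ℤ) + 1) ((R : ℤ) - 1), ((R - d.natAbs : ℕ) : ℝ) * h d := by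
  rw [← Finset.sum_product']
  rw [← Finset.sum_fiberwise_of_maps_to (g := fun p : ℕ × ℕ => (p.1 : ℤ) - p.2)
    (t := Finset.Icc (-(R : ℤ) + 1) ((R : ℤ) - 1))]
  · refine Finset.sum_congr rfl fun d hd => ?_
    rw [Finset.sum_congr rfl (fun p hp => by
        simp only [Finset.mem_filter] at hp
        rw [hp.2]), Finset.sum_const, nsmul_eq_mul, fiber_card]
  · intro p hp
    simp only [Finset.mem_product, Finset.mem_range] at hp
    simp only [Finset.mem_Icc]
    omega

/-- **Weyl–van der Corput inequality.** -/
theorem weyl_van_der_corput (N R : ℕ) (hR : 0 < R) (z : ℕ → ℂ) :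
    ‖∑ n ∈ Finset.range N, z n‖ ^ 2 ≤
      (((N : ℝ) + R - 1) / R) *
        ∑ r ∈ Finset.Icc (-(R : ℤ) + 1) ((R : ℤ) - 1),
          (1 - |(r : ℝ)| / R) *
            ‖∑ n ∈ (Finset.range N).filter
                (fun n : ℕ => 0 ≤ (n : ℤ) + r ∧ (n : ℤ) + r < (N : ℤ)),
              (starRingEnd ℂ) (z n) * z ((n : ℤ) + r).toNat‖ := by
  set f : ℤ → ℂ := fun n => if 0 ≤ n ∧ n < (N : ℤ) then z n.toNat else 0 with hf
  set W : ℤ → ℂ := fun d => ∑ n ∈ (Finset.range N).filter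
      (fun n : ℕ => 0 ≤ (n : ℤ) + d ∧ (n : ℤ) + d < (N : ℤ)),
      (starRingEnd ℂ) (z n) * z ((n : ℤ) + d).toNat with hWdef
  set M : Finset ℤ := Finset.Ico (0 : ℤ) ((N : ℤ) + R - 1) with hM
  set g : ℤ → ℂ := fun m => ∑ r ∈ Finset.range R, f (m - r) with hg
  set S : ℂ := ∑ n ∈ Finset.range N, z n with hS
  have hR' : (0 : ℝ) < R := by exact_mod_cast hR
  -- support restriction
  have key1 : ∀ (a b : ℤ), a ≤ 0 → (N : ℤ) ≤ b → ∀ G : ℤ → ℂ,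
      (∀ n, ¬(0 ≤ n ∧ n < (N : ℤ)) → G n = 0) →
      ∑ n ∈ Finset.Ico a b, G n = ∑ n ∈ Finset.Ico (0 : ℤ) (N : ℤ), G n := by
    intro a b ha hb G hG
    refine (Finset.sum_subset (Finset.Ico_subset_Ico ha hb) ?_).symm
    intro n hn hn'
    simp only [Finset.mem_Ico] at hn hn'
    exact hG n (by omega)
  -- Ico 0 N to range N
  have key2 : ∀ G : ℤ → ℂ, ∑ n ∈ Finset.Ico (0 : ℤ) (N : ℤ), G n = ∑ k ∈ Finset.range N, G k := by
    intro G
    refine Finset.sum_bij' (fun n _ => n.toNat) (fun k _ => (k : ℤ)) ?_ ?_ ?_ ?_ ?_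
    · intro a ha; simp only [Finset.mem_Ico] at ha; simp only [Finset.mem_range]; omega
    · intro b hb; simp only [Finset.mem_range] at hb; simp only [Finset.mem_Ico]; omega
    · intro a ha; simp only [Finset.mem_Ico] at ha; omega
    · intro b hb; simp
    · intro a ha; simp only [Finset.mem_Ico] at ha
      congr 1; omega
  have hf0 : ∀ n : ℤ, ¬(0 ≤ n ∧ n < (N : ℤ)) → f n = 0 := by
    intro n hn; rw [hf]; exact if_neg hn
  have hsum_f : ∑ n ∈ Finset.Ico (0 : ℤ) (N : ℤ), f n = S := by
    rw [key2, hS]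
    refine Finset.sum_congr rfl fun k hk => ?_
    simp only [Finset.mem_range] at hk
    rw [hf]
    simp only []
    rw [if_pos (by omega)]
    simp
  -- step 1: sum of g over M is R * S
  have hgsum : ∑ m ∈ M, g m = (R : ℂ) * S := by
    rw [hg, hM]
    simp only []
    rw [Finset.sum_comm]
    rw [Finset.sum_congr rfl (fun r hr => ?_)]
    · rw [Finset.sum_const, nsmul_eq_mul, Finset.card_range]
    · simp only [Finset.mem_range] at hr
      rw [sum_Ico_shift, key1 _ _ (by omega) (by push_cast; omega) _ hf0, hsum_f]
  -- step 2: the correlation sums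
  have hW : ∀ r s : ℕ, r < R → s < R →
      ∑ m ∈ M, (starRingEnd ℂ) (f (m - r)) * f (m - s) = W ((r : ℤ) - s) := by
    intro r s hr hs
    have hterm : ∀ m : ℤ, (starRingEnd ℂ) (f (m - r)) * f (m - s)
        = (fun n => (starRingEnd ℂ) (f n) * f (n + ((r : ℤ) - s))) (m - r) := by
      intro m; simp only []; ring_nf
    rw [Finset.sum_congr rfl (fun m _ => hterm m), hM]
    rw [sum_Ico_shift (fun n => (starRingEnd ℂ) (f n) * f (n + ((r : ℤ) - s))) 0 ((N : ℤ) + R - 1) r]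
    rw [key1 _ _ (by omega) (by push_cast; omega) _ (fun n hn => by
      rw [hf0 n hn]; simp)]
    rw [key2, hWdef]
    simp only []
    rw [Finset.sum_filter]
    refine Finset.sum_congr rfl fun k hk => ?_
    simp only [Finset.mem_range] at hk
    rw [hf]
    simp only []
    rw [if_pos (by omega)]
    by_cases hcond : (0 : ℤ) ≤ (k : ℤ) + ((r : ℤ) - s) ∧ (k : ℤ) + ((r : ℤ) - s) < (N : ℤ)
    · rw [if_pos hcond, if_pos hcond]
      simp
    · rw [if_neg hcond, if_neg hcond, mul_zero]
  -- abbreviation for the interval of shifts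
  set D : Finset ℤ := Finset.Icc (-(R : ℤ) + 1) ((R : ℤ) - 1) with hD
  -- step 3: bound the sum of squares
  have habs2 : ∑ m ∈ M, (‖g m‖) ^ 2
      ≤ ∑ d ∈ D, ((R - d.natAbs : ℕ) : ℝ) * ‖W d‖ := by
    have e1 : ∑ m ∈ M, (starRingEnd ℂ) (g m) * g m
        = ((∑ m ∈ M, (‖g m‖) ^ 2 : ℝ) : ℂ) := by
      push_cast
      refine Finset.sum_congr rfl fun m _ => ?_
      rw [RCLike.conj_mul]
      norm_cast
    have e2 : ∑ m ∈ M, (starRingEnd ℂ) (g m) * g m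
        = ∑ r ∈ Finset.range R, ∑ s ∈ Finset.range R, W ((r : ℤ) - s) := by
      have hexp : ∀ m : ℤ, (starRingEnd ℂ) (g m) * g m
          = ∑ r ∈ Finset.range R, ∑ s ∈ Finset.range R,
              (starRingEnd ℂ) (f (m - r)) * f (m - s) := by
        intro m
        rw [hg]
        simp only []
        rw [map_sum, Finset.sum_mul_sum]
      rw [Finset.sum_congr rfl (fun m _ => hexp m), Finset.sum_comm]
      refine Finset.sum_congr rfl fun r hr => ?_
      rw [Finset.sum_comm]
      refine Finset.sum_congr rfl fun s hs => ?_
      exact hW r s (Finset.mem_range.mp hr) (Finset.mem_range.mp hs)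
    have e3 : ∑ m ∈ M, (‖g m‖) ^ 2
        = ‖∑ r ∈ Finset.range R, ∑ s ∈ Finset.range R, W ((r : ℤ) - s)‖ := by
      rw [← e2, e1, Complex.norm_real, Real.norm_eq_abs]
      exact (_root_.abs_of_nonneg (by positivity)).symm
    rw [e3, hD, ← sum_shift_count R (fun d => ‖W d‖)]
    calc ‖∑ r ∈ Finset.range R, ∑ s ∈ Finset.range R, W ((r : ℤ) - s)‖
        ≤ ∑ r ∈ Finset.range R, ‖∑ s ∈ Finset.range R, W ((r : ℤ) - s)‖ :=
          norm_sum_le _ _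
      _ ≤ ∑ r ∈ Finset.range R, ∑ s ∈ Finset.range R, ‖W ((r : ℤ) - s)‖ :=
          Finset.sum_le_sum fun r _ => norm_sum_le _ _
  -- cardinality of M
  have hcard : (M.card : ℝ) = (N : ℝ) + R - 1 := by
    rw [hM, Int.card_Ico]
    have h1 : ((N : ℤ) + R - 1 - 0).toNat = N + R - 1 := by omega
    rw [h1, Nat.cast_sub (by omega)]
    push_cast
    ring
  -- Cauchy–Schwarz
  have cs : ((R : ℝ) * ‖S‖) ^ 2
      ≤ ((N : ℝ) + R - 1) * ∑ m ∈ M, (‖g m‖) ^ 2 := by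
    have h1 : (R : ℝ) * ‖S‖ = ‖∑ m ∈ M, g m‖ := by
      rw [hgsum, norm_mul, Complex.norm_natCast]
    calc ((R : ℝ) * ‖S‖) ^ 2
        = (‖∑ m ∈ M, g m‖) ^ 2 := by rw [h1]
      _ ≤ (∑ m ∈ M, ‖g m‖) ^ 2 := by
          apply pow_le_pow_left₀ (norm_nonneg _) (norm_sum_le _ _)
      _ ≤ (M.card : ℝ) * ∑ m ∈ M, (‖g m‖) ^ 2 := sq_sum_le_card_mul_sum_sq
      _ = ((N : ℝ) + R - 1) * ∑ m ∈ M, (‖g m‖) ^ 2 := by rw [hcard]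
  -- relate the weighted sums
  have hT : ∑ d ∈ D, ((R - d.natAbs : ℕ) : ℝ) * ‖W d‖
      = (R : ℝ) * ∑ d ∈ D, (1 - |(d : ℝ)| / R) * ‖W d‖ := by
    rw [Finset.mul_sum]
    refine Finset.sum_congr rfl fun d hd => ?_
    rw [hD] at hd
    simp only [Finset.mem_Icc] at hd
    have h1 : d.natAbs ≤ R := by omega
    have h2 : ((R - d.natAbs : ℕ) : ℝ) = (R : ℝ) - |(d : ℝ)| := by
      rw [Nat.cast_sub h1, Nat.cast_natAbs, Int.cast_abs]
    rw [h2]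
    field_simp
  -- assemble
  have hNR : (0 : ℝ) ≤ (N : ℝ) + R - 1 := by
    have : (1 : ℝ) ≤ R := by exact_mod_cast hR
    have : (0 : ℝ) ≤ N := Nat.cast_nonneg N
    linarith
  have main : ((R : ℝ) * ‖S‖) ^ 2
      ≤ ((N : ℝ) + R - 1) * ((R : ℝ) * ∑ d ∈ D, (1 - |(d : ℝ)| / R) * ‖W d‖) := by
    calc ((R : ℝ) * ‖S‖) ^ 2
        ≤ ((N : ℝ) + R - 1) * ∑ m ∈ M, (‖g m‖) ^ 2 := cs
      _ ≤ ((N : ℝ) + R - 1) * ∑ d ∈ D, ((R - d.natAbs : ℕ) : ℝ) * ‖W d‖ :=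
          mul_le_mul_of_nonneg_left habs2 hNR
      _ = _ := by rw [hT]
  rw [div_mul_eq_mul_div, le_div_iff₀ hR']
  nlinarith [main, hR', sq_nonneg (‖S‖)]

end
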